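/- Let q be a prime power, n ≥ 1, F = 𝔽_{q^n}, and let m be a positive integer with gcd(m,n) = 1. Let A = (a_{ij}) be a nonzero 2×2 matrix over F and let Γ = {[x] ∈ PG(1,q^n) : a₁₁x₁^{q^m+1} + a₁₂x₁x₂^{q^m} + a₂₁x₂x₁^{q^m} + a₂₂x₂^{q^m+1} = 0} be the set of absolute points of the induced correlation. Then the cardinality of Γ belongs to {0, 1, 2, q+1}. -/

import Mathlib

open scoped LinearAlgebra.Projectivization

section AuxPG1

variable {F : Type*} [Field F]

private def gForm (A : Matrix (Fin 2) (Fin 2) F) (s : ℕ) (x : Fin 2 → F) : F :=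
  A 0 0 * x 0 ^ (s + 1) + A 0 1 * x 0 * x 1 ^ s + A 1 0 * x 1 * x 0 ^ s + A 1 1 * x 1 ^ (s + 1)

private lemma gForm_smul (A : Matrix (Fin 2) (Fin 2) F) (s : ℕ) (c : F) (x : Fin 2 → F) :
    gForm A s (c • x) = c ^ (s + 1) * gForm A s x := by
  simp only [gForm, Pi.smul_apply, smul_eq_mul, mul_pow, pow_succ]
  ring

private lemma gForm_expand (A : Matrix (Fin 2) (Fin 2) F) (s : ℕ)
    (hadd : ∀ a b : F, (a + b) ^ s = a ^ s + b ^ s) (x₀ x₁ : F) (w₁ w₂ : Fin 2 → F) :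
    gForm A s (x₀ • w₁ + x₁ • w₂) =
      x₀ ^ (s + 1) * gForm A s w₁ + x₁ ^ (s + 1) * gForm A s w₂ +
      x₀ * x₁ ^ s * (A 0 0 * w₁ 0 * w₂ 0 ^ s + A 0 1 * w₁ 0 * w₂ 1 ^ s +
        A 1 0 * w₁ 1 * w₂ 0 ^ s + A 1 1 * w₁ 1 * w₂ 1 ^ s) +
      x₁ * x₀ ^ s * (A 0 0 * w₂ 0 * w₁ 0 ^ s + A 0 1 * w₂ 0 * w₁ 1 ^ s +
        A 1 0 * w₂ 1 * w₁ 0 ^ s + A 1 1 * w₂ 1 * w₁ 1 ^ s) := by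
  simp only [gForm, Pi.add_apply, Pi.smul_apply, smul_eq_mul, pow_succ, hadd, mul_pow]
  ring

private lemma ext2 {α : Type*} {v w : Fin 2 → α} (h0 : v 0 = w 0) (h1 : v 1 = w 1) : v = w := by
  funext i
  fin_cases i
  · exact h0
  · exact h1

private lemma vec_ne_zero_iff (v : Fin 2 → F) : v ≠ 0 ↔ v 0 ≠ 0 ∨ v 1 ≠ 0 := by
  constructor
  · intro h
    by_contra hc
    push_neg at hc
    exact h (ext2 hc.1 hc.2)
  · rintro (h | h) hv
    · exact h (by rw [hv]; rfl)
    · exact h (by rw [hv]; rfl)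

private lemma indep_aux {w₁ w₂ : Fin 2 → F} (hδ : w₁ 0 * w₂ 1 - w₁ 1 * w₂ 0 ≠ 0)
    {y₀ y₁ : F} (h0 : y₀ * w₁ 0 + y₁ * w₂ 0 = 0) (h1 : y₀ * w₁ 1 + y₁ * w₂ 1 = 0) :
    y₀ = 0 ∧ y₁ = 0 := by
  constructor
  · have h : y₀ * (w₁ 0 * w₂ 1 - w₁ 1 * w₂ 0) = 0 := by
      linear_combination w₂ 1 * h0 - w₂ 0 * h1
    exact (mul_eq_zero.mp h).resolve_right hδ
  · have h : y₁ * (w₁ 0 * w₂ 1 - w₁ 1 * w₂ 0) = 0 := by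
      linear_combination w₁ 0 * h1 - w₁ 1 * h0
    exact (mul_eq_zero.mp h).resolve_right hδ

private lemma frob_add (q n : ℕ) (hq : IsPrimePow q) (hn : 1 ≤ n)
    (F : Type*) [Field F] [Fintype F] (hF : Fintype.card F = q ^ n) :
    ∀ (e : ℕ) (a b : F), (a + b) ^ q ^ e = a ^ q ^ e + b ^ q ^ e := by
  obtain ⟨p, k, hp, hk, rfl⟩ := hq
  have hp' : p.Prime := Nat.prime_iff.mpr hp
  haveI : Fact p.Prime := ⟨hp'⟩
  have hr := ringChar.charP F
  obtain ⟨d, hd, hcard⟩ := FiniteField.card F (ringChar F)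
  have hrp : ringChar F = p := by
    have h2 : ringChar F ∣ Fintype.card F := by
      rw [hcard]; exact dvd_pow_self _ (by exact_mod_cast d.pos.ne')
    rw [hF, ← pow_mul] at h2
    exact (Nat.prime_dvd_prime_iff_eq hd hp').mp (hd.dvd_of_dvd_pow h2)
  rw [hrp] at hr
  haveI : CharP F p := hr
  intro e a b
  rw [← pow_mul]
  exact add_pow_char_pow a b p (k * e)

private lemma ncard_pow_fix (q n m : ℕ) (hq : IsPrimePow q) (hn : 1 ≤ n) (hm : 0 < m)
    (hmn : Nat.gcd m n = 1) (F : Type*) [Field F] [Fintype F] (hF : Fintype.card F = q ^ n) :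
    {t : F | t ^ q ^ m = t}.ncard = q := by
  classical
  have hq2 : 2 ≤ q := hq.two_le
  have hadd := frob_add q n hq hn F hF
  have hinj : ∀ (e : ℕ) (a b : F), a ^ q ^ e = b ^ q ^ e → a = b := by
    intro e a b h
    have h1 := hadd e (a - b) b
    rw [sub_add_cancel, h] at h1
    have h2 : (a - b) ^ q ^ e = 0 := (right_eq_add.mp h1)
    have h3 : a - b = 0 := by
      have : q ^ e ≠ 0 := by positivity
      exact pow_eq_zero_iff this |>.mp h2
    exact sub_eq_zero.mp h3
  -- the fixed sets for exponents q^m and q agree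
  have hsetq : {t : F | t ^ q ^ m = t} = {t : F | t ^ q = t} := by
    ext t
    simp only [Set.mem_setOf_eq]
    have hPadd : ∀ x y : ℕ, t ^ q ^ x = t → t ^ q ^ y = t → t ^ q ^ (x + y) = t := by
      intro x y hx hy
      rw [pow_add, pow_mul, hx, hy]
    have hPmul : ∀ (a j : ℕ), t ^ q ^ a = t → t ^ q ^ (a * j) = t := by
      intro a j ha
      induction j with
      | zero => simp
      | succ j ih => rw [Nat.mul_succ]; exact hPadd _ _ ih ha
    constructor
    · intro ht
      have hPcancel : ∀ x y : ℕ, t ^ q ^ x = t → t ^ q ^ (x + y) = t → t ^ q ^ y = t := by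
        intro x y hx hxy
        apply hinj x
        rw [← pow_mul, ← pow_add, Nat.add_comm, hxy, hx]
      have hgcd : ∀ a b : ℕ, t ^ q ^ a = t → t ^ q ^ b = t → t ^ q ^ Nat.gcd a b = t := by
        intro a b
        induction a, b using Nat.gcd.induction with
        | H0 b => intro _ hb; simpa using hb
        | H1 a b ha ih =>
          intro hpa hpb
          rw [Nat.gcd_rec]
          apply ih _ hpa
          apply hPcancel (a * (b / a)) (b % a) (hPmul a (b / a) hpa)
          rw [Nat.div_add_mod]
          exact hpb
      have hn' : t ^ q ^ n = t := by
        rw [← hF]; exact FiniteField.pow_card t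
      have := hgcd m n ht hn'
      rwa [hmn, pow_one] at this
    · intro h
      have hall : ∀ j : ℕ, t ^ q ^ j = t := by
        intro j
        induction j with
        | zero => simp
        | succ j ih => rw [pow_succ, pow_mul, ih, h]
      exact hall m
  rw [hsetq]
  set d := q - 1 with hd
  have hdpos : 0 < d := by omega
  set N := q ^ n - 1 with hN
  have hq2n : 2 ≤ q ^ n := le_trans hq2 (Nat.le_self_pow (by omega) q)
  have hN0 : N ≠ 0 := by omega
  have hcardu : Fintype.card Fˣ = N := by rw [Fintype.card_units, hF]
  have hdN : d ∣ N := by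
    rw [hd, hN]
    simpa using Nat.sub_dvd_pow_sub_pow q 1 n
  have hUcardle : (Finset.univ.filter (fun u : Fˣ => u ^ d = 1)).card ≤ d := by
    have h1 : ∀ u ∈ Finset.univ.filter (fun u : Fˣ => u ^ d = 1),
        ((u : F)) ∈ (Polynomial.nthRoots d (1 : F)).toFinset := by
      intro u hu
      rw [Multiset.mem_toFinset, Polynomial.mem_nthRoots hdpos]
      have h2 := (Finset.mem_filter.mp hu).2
      have h3 : ((u ^ d : Fˣ) : F) = ((1 : Fˣ) : F) := by rw [h2]
      simpa using h3
    calc (Finset.univ.filter (fun u : Fˣ => u ^ d = 1)).card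
        ≤ (Polynomial.nthRoots d (1 : F)).toFinset.card :=
          Finset.card_le_card_of_injOn (fun u : Fˣ => (u : F)) h1
            (fun a _ b _ h => Units.ext h)
      _ ≤ Multiset.card (Polynomial.nthRoots d (1 : F)) := (Polynomial.nthRoots d (1 : F)).toFinset_card_le
      _ ≤ d := Polynomial.card_nthRoots d (1 : F)
  obtain ⟨ζ, hζ⟩ := IsCyclic.exists_generator (α := Fˣ)
  have hord : orderOf ζ = N := by
    rw [orderOf_eq_card_of_forall_mem_zpowers hζ, Nat.card_eq_fintype_card, hcardu]
  have hordη : orderOf (ζ ^ (N / d)) = d := by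
    rw [orderOf_pow, hord, Nat.gcd_eq_right (Nat.div_dvd_of_dvd hdN),
      Nat.div_div_self hdN hN0]
  have hUcardge : d ≤ (Finset.univ.filter (fun u : Fˣ => u ^ d = 1)).card := by
    have hmaps : ∀ j ∈ Finset.range d,
        (ζ ^ (N / d)) ^ j ∈ Finset.univ.filter (fun u : Fˣ => u ^ d = 1) := by
      intro j _
      simp only [Finset.mem_filter, Finset.mem_univ, true_and]
      have h1 := pow_orderOf_eq_one (ζ ^ (N / d))
      rw [hordη] at h1
      rw [← pow_mul, mul_comm, pow_mul, h1, one_pow]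
    have hinj2 : Set.InjOn (fun j => (ζ ^ (N / d)) ^ j) (Finset.range d) := by
      intro a ha b hb h
      refine pow_injOn_Iio_orderOf ?_ ?_ h
      · simpa [hordη] using Finset.mem_range.mp (by simpa using ha)
      · simpa [hordη] using Finset.mem_range.mp (by simpa using hb)
    calc d = (Finset.range d).card := (Finset.card_range d).symm
      _ ≤ _ := Finset.card_le_card_of_injOn _ hmaps hinj2
  have hUcard : (Finset.univ.filter (fun u : Fˣ => u ^ d = 1)).card = d :=
    le_antisymm hUcardle hUcardge
  have hSeq : (Finset.univ.filter (fun t : F => t ^ q = t)) =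
      insert (0 : F) ((Finset.univ.filter (fun u : Fˣ => u ^ d = 1)).image
        (fun u : Fˣ => (u : F))) := by
    ext t
    rw [Finset.mem_filter, Finset.mem_insert, Finset.mem_image]
    constructor
    · rintro ⟨-, ht⟩
      by_cases h0 : t = 0
      · exact Or.inl h0
      · refine Or.inr ⟨Units.mk0 t h0, ?_, rfl⟩
        rw [Finset.mem_filter]
        refine ⟨Finset.mem_univ _, ?_⟩
        have hdq : d + 1 = q := by omega
        have h2 : t ^ d * t = 1 * t := by
          rw [← pow_succ, hdq, ht, one_mul]
        have h3 : t ^ d = 1 := mul_right_cancel₀ h0 h2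
        apply Units.ext
        push_cast
        simp [h3]
    · rintro (rfl | ⟨u, hu, rfl⟩)
      · exact ⟨Finset.mem_univ _, zero_pow (by omega)⟩
      · refine ⟨Finset.mem_univ _, ?_⟩
        have h3 : (u : F) ^ d = 1 := by
          have h4 : ((u ^ d : Fˣ) : F) = ((1 : Fˣ) : F) := by
            rw [(Finset.mem_filter.mp hu).2]
          simpa using h4
        have hdq : d + 1 = q := by omega
        calc (u : F) ^ q = (u : F) ^ (d + 1) := by rw [hdq]
          _ = (u : F) ^ d * u := pow_succ _ _
          _ = u := by rw [h3, one_mul]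
  have h0notmem : (0 : F) ∉ (Finset.univ.filter (fun u : Fˣ => u ^ d = 1)).image
      (fun u : Fˣ => (u : F)) := by
    intro h
    rw [Finset.mem_image] at h
    obtain ⟨u, -, hu⟩ := h
    exact u.ne_zero hu
  have hfin : {t : F | t ^ q = t} = ↑(Finset.univ.filter (fun t : F => t ^ q = t)) := by
    ext t; simp
  rw [hfin, Set.ncard_coe_finset, hSeq, Finset.card_insert_of_notMem h0notmem,
    Finset.card_image_of_injective _ (fun a b h => Units.ext h), hUcard]
  omega

end AuxPG1

/-- The set of absolute points in PG(1,qⁿ) of the correlation induced by a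
σ-sesquilinear form (with σ : x ↦ x^(q^m), gcd(m,n)=1) given by a nonzero 2×2 matrix A
has cardinality 0, 1, 2 or q+1. -/
theorem absolute_points_PG1_card
    (q n m : ℕ) (hq : IsPrimePow q) (hn : 1 ≤ n) (hm : 0 < m)
    (hmn : Nat.gcd m n = 1)
    (F : Type*) [Field F] [Fintype F] (hF : Fintype.card F = q ^ n)
    (A : Matrix (Fin 2) (Fin 2) F) (hA : A ≠ 0)
    (Γ : Set (ℙ F (Fin 2 → F)))
    (hΓ : Γ = {P : ℙ F (Fin 2 → F) |
      A 0 0 * (P.rep 0) ^ (q ^ m + 1) + A 0 1 * P.rep 0 * (P.rep 1) ^ (q ^ m) +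
        A 1 0 * P.rep 1 * (P.rep 0) ^ (q ^ m) + A 1 1 * (P.rep 1) ^ (q ^ m + 1) = 0}) :
    Γ.ncard ∈ ({0, 1, 2, q + 1} : Set ℕ) := by
  classical
  haveI : Finite (ℙ F (Fin 2 → F)) := Quotient.finite _
  set s := q ^ m with hs
  have hq2 : 2 ≤ q := hq.two_le
  have hs0 : s ≠ 0 := by positivity
  have hΓ' : Γ = {P : ℙ F (Fin 2 → F) | gForm A s P.rep = 0} := hΓ
  simp only [Set.mem_insert_iff, Set.mem_singleton_iff]
  by_cases hcard : Γ.ncard ≤ 2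
  · omega
  push_neg at hcard
  right; right; right
  obtain ⟨P₁, h₁, P₂, h₂, P₃, h₃, h12, h13, h23⟩ :=
    (Set.two_lt_ncard (Set.toFinite Γ)).mp hcard
  have hadd : ∀ a b : F, (a + b) ^ s = a ^ s + b ^ s := fun a b =>
    frob_add q n hq hn F hF m a b
  -- membership test for arbitrary nonzero representatives
  have hmem : ∀ (v : Fin 2 → F) (hv : v ≠ 0),
      (Projectivization.mk F v hv ∈ Γ ↔ gForm A s v = 0) := by
    intro v hv
    rw [hΓ']
    simp only [Set.mem_setOf_eq]
    have h1 : Projectivization.mk F (Projectivization.mk F v hv).rep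
        (Projectivization.mk F v hv).rep_nonzero = Projectivization.mk F v hv :=
      Projectivization.mk_rep _
    obtain ⟨a, ha⟩ := (Projectivization.mk_eq_mk_iff F _ _ _ _).mp h1
    rw [← ha, Units.smul_def, gForm_smul]
    constructor
    · intro h
      rcases mul_eq_zero.mp h with h | h
      · exact absurd (pow_eq_zero_iff (Nat.succ_ne_zero s) |>.mp h) a.ne_zero
      · exact h
    · intro h; rw [h, mul_zero]
  -- two distinct projective points have non-proportional representatives
  have hne : ∀ (v w : Fin 2 → F) (hv : v ≠ 0) (hw : w ≠ 0),
      Projectivization.mk F v hv ≠ Projectivization.mk F w hw →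
      v 0 * w 1 - v 1 * w 0 ≠ 0 := by
    intro v w hv hw hnemk hδ
    apply hnemk
    rw [Projectivization.mk_eq_mk_iff']
    rw [sub_eq_zero] at hδ
    rcases (vec_ne_zero_iff w).mp hw with h0 | h1
    · refine ⟨v 0 / w 0, ext2 ?_ ?_⟩ <;>
        simp only [Pi.smul_apply, smul_eq_mul]
      · field_simp
      · field_simp
        linear_combination hδ
    · refine ⟨v 1 / w 1, ext2 ?_ ?_⟩ <;>
        simp only [Pi.smul_apply, smul_eq_mul]
      · field_simp
        linear_combination -hδ
      · field_simp
  have hg₁ : gForm A s P₁.rep = 0 := by rw [hΓ'] at h₁; exact h₁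
  have hg₂ : gForm A s P₂.rep = 0 := by rw [hΓ'] at h₂; exact h₂
  have hg₃ : gForm A s P₃.rep = 0 := by rw [hΓ'] at h₃; exact h₃
  set v₁ := P₁.rep with hv₁
  set v₂ := P₂.rep with hv₂
  set v₃ := P₃.rep with hv₃
  have hv₁0 : v₁ ≠ 0 := P₁.rep_nonzero
  have hv₂0 : v₂ ≠ 0 := P₂.rep_nonzero
  have hv₃0 : v₃ ≠ 0 := P₃.rep_nonzero
  have hmk₁ : Projectivization.mk F v₁ hv₁0 = P₁ := Projectivization.mk_rep P₁
  have hmk₂ : Projectivization.mk F v₂ hv₂0 = P₂ := Projectivization.mk_rep P₂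
  have hmk₃ : Projectivization.mk F v₃ hv₃0 = P₃ := Projectivization.mk_rep P₃
  have hδ12 : v₁ 0 * v₂ 1 - v₁ 1 * v₂ 0 ≠ 0 :=
    hne v₁ v₂ hv₁0 hv₂0 (by rw [hmk₁, hmk₂]; exact h12)
  have hδ32 : v₃ 0 * v₂ 1 - v₃ 1 * v₂ 0 ≠ 0 :=
    hne v₃ v₂ hv₃0 hv₂0 (by rw [hmk₃, hmk₂]; exact h23.symm)
  have hδ13 : v₁ 0 * v₃ 1 - v₁ 1 * v₃ 0 ≠ 0 :=
    hne v₁ v₃ hv₁0 hv₃0 (by rw [hmk₁, hmk₃]; exact h13)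
  set α := (v₃ 0 * v₂ 1 - v₃ 1 * v₂ 0) / (v₁ 0 * v₂ 1 - v₁ 1 * v₂ 0) with hα
  set β := (v₁ 0 * v₃ 1 - v₁ 1 * v₃ 0) / (v₁ 0 * v₂ 1 - v₁ 1 * v₂ 0) with hβ
  have hα0 : α ≠ 0 := div_ne_zero hδ32 hδ12
  have hβ0 : β ≠ 0 := div_ne_zero hδ13 hδ12
  set w₁ : Fin 2 → F := α • v₁ with hw₁
  set w₂ : Fin 2 → F := β • v₂ with hw₂
  have hw₁0 : w₁ ≠ 0 := smul_ne_zero hα0 hv₁0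
  have hw₂0 : w₂ ≠ 0 := smul_ne_zero hβ0 hv₂0
  have hgw₁ : gForm A s w₁ = 0 := by rw [hw₁, gForm_smul, hg₁, mul_zero]
  have hgw₂ : gForm A s w₂ = 0 := by rw [hw₂, gForm_smul, hg₂, mul_zero]
  have hδw : w₁ 0 * w₂ 1 - w₁ 1 * w₂ 0 ≠ 0 := by
    have hwδ : w₁ 0 * w₂ 1 - w₁ 1 * w₂ 0 =
        α * β * (v₁ 0 * v₂ 1 - v₁ 1 * v₂ 0) := by
      simp only [hw₁, hw₂, Pi.smul_apply, smul_eq_mul]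
      ring
    rw [hwδ]
    exact mul_ne_zero (mul_ne_zero hα0 hβ0) hδ12
  have hsum : w₁ + w₂ = v₃ := by
    apply ext2 <;>
      simp only [Pi.add_apply, Pi.smul_apply, smul_eq_mul, hw₁, hw₂, hα, hβ]
    · rw [div_mul_eq_mul_div, div_mul_eq_mul_div, ← add_div, div_eq_iff hδ12]
      ring
    · rw [div_mul_eq_mul_div, div_mul_eq_mul_div, ← add_div, div_eq_iff hδ12]
      ring
  set bB := A 0 0 * w₁ 0 * w₂ 0 ^ s + A 0 1 * w₁ 0 * w₂ 1 ^ s +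
    A 1 0 * w₁ 1 * w₂ 0 ^ s + A 1 1 * w₁ 1 * w₂ 1 ^ s with hbB
  set cB := A 0 0 * w₂ 0 * w₁ 0 ^ s + A 0 1 * w₂ 0 * w₁ 1 ^ s +
    A 1 0 * w₂ 1 * w₁ 0 ^ s + A 1 1 * w₂ 1 * w₁ 1 ^ s with hcB
  have hexp : ∀ x₀ x₁ : F, gForm A s (x₀ • w₁ + x₁ • w₂) =
      x₀ * x₁ ^ s * bB + x₁ * x₀ ^ s * cB := by
    intro x₀ x₁
    rw [gForm_expand A s hadd x₀ x₁ w₁ w₂, hgw₁, hgw₂, hbB, hcB]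
    ring
  have hcb : cB = -bB := by
    have h0 := hexp 1 1
    have hv3 : (1 : F) • w₁ + (1 : F) • w₂ = v₃ := by rw [one_smul, one_smul, hsum]
    rw [hv3, hg₃] at h0
    simp only [one_mul, one_pow] at h0
    linear_combination -h0
  have hdecomp : ∀ v : Fin 2 → F,
      v = ((v 0 * w₂ 1 - v 1 * w₂ 0) / (w₁ 0 * w₂ 1 - w₁ 1 * w₂ 0)) • w₁ +
        ((w₁ 0 * v 1 - w₁ 1 * v 0) / (w₁ 0 * w₂ 1 - w₁ 1 * w₂ 0)) • w₂ := by
    intro v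
    apply ext2 <;> simp only [Pi.add_apply, Pi.smul_apply, smul_eq_mul]
    · rw [div_mul_eq_mul_div, div_mul_eq_mul_div, ← add_div, eq_div_iff hδw]
      ring
    · rw [div_mul_eq_mul_div, div_mul_eq_mul_div, ← add_div, eq_div_iff hδw]
      ring
  clear_value v₁ v₂ v₃ α β w₁ w₂ bB cB
  have hall_of_b0 : bB = 0 → ∀ u : F, u ^ s = u := by
    intro hb0 u
    have hzero : ∀ x : Fin 2 → F, gForm A s x = 0 := by
      intro x
      rw [hdecomp x, hexp, hb0, hcb, hb0]
      ring
    have e00 : A 0 0 = 0 := by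
      have h := hzero ![1, 0]
      simp only [gForm, Matrix.cons_val_zero, Matrix.cons_val_one, Matrix.head_cons,
        one_pow, mul_one, zero_pow hs0, zero_pow (Nat.succ_ne_zero s), mul_zero,
        add_zero, zero_mul] at h
      exact h
    have e11 : A 1 1 = 0 := by
      have h := hzero ![0, 1]
      simp only [gForm, Matrix.cons_val_zero, Matrix.cons_val_one, Matrix.head_cons,
        one_pow, mul_one, zero_pow hs0, zero_pow (Nat.succ_ne_zero s), mul_zero,
        add_zero, zero_mul, zero_add, mul_zero] at h
      exact h
    have e01 : A 1 0 = -A 0 1 := by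
      have h := hzero ![1, 1]
      simp only [gForm, Matrix.cons_val_zero, Matrix.cons_val_one, Matrix.head_cons,
        one_pow, mul_one, e00, e11, zero_mul, zero_add, add_zero] at h
      linear_combination h
    have hA01 : A 0 1 ≠ 0 := by
      intro h0
      apply hA
      ext i j
      fin_cases i <;> fin_cases j <;>
        simp [e00, e11, e01, h0]
    have h := hzero ![1, u]
    simp only [gForm, Matrix.cons_val_zero, Matrix.cons_val_one, Matrix.head_cons,
      one_pow, mul_one, e00, e11, e01, zero_mul, zero_add, add_zero] at h
    have h2 : A 0 1 * (u ^ s - u) = 0 := by linear_combination h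
    rcases mul_eq_zero.mp h2 with h3 | h3
    · exact absurd h3 hA01
    · exact sub_eq_zero.mp h3
  have hwne : ∀ t : F, w₁ + t • w₂ ≠ 0 := by
    intro t h
    apply hδw
    have h0 := congrFun h 0
    have h1 := congrFun h 1
    simp only [Pi.add_apply, Pi.smul_apply, smul_eq_mul, Pi.zero_apply] at h0 h1
    linear_combination w₂ 1 * h0 - w₂ 0 * h1
  set f : F → ℙ F (Fin 2 → F) :=
    fun t => Projectivization.mk F (w₁ + t • w₂) (hwne t) with hf
  have hΓeq : Γ = insert (Projectivization.mk F w₂ hw₂0) (f '' {t : F | t ^ s = t}) := by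
    ext P
    constructor
    · intro hP
      have hgv : gForm A s P.rep = 0 := by rw [hΓ'] at hP; exact hP
      have hv0 : P.rep ≠ 0 := P.rep_nonzero
      set v := P.rep with hv
      set x₀ := (v 0 * w₂ 1 - v 1 * w₂ 0) / (w₁ 0 * w₂ 1 - w₁ 1 * w₂ 0) with hx₀
      set x₁ := (w₁ 0 * v 1 - w₁ 1 * v 0) / (w₁ 0 * w₂ 1 - w₁ 1 * w₂ 0) with hx₁
      have hvd : v = x₀ • w₁ + x₁ • w₂ := hdecomp v
      clear_value x₀ x₁
      have hgv2 : bB * (x₀ * x₁ ^ s - x₁ * x₀ ^ s) = 0 := by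
        have h := hexp x₀ x₁
        rw [← hvd, hgv] at h
        linear_combination -h - x₁ * x₀ ^ s * hcb
      by_cases hx₀0 : x₀ = 0
      · apply Set.mem_insert_iff.mpr
        left
        have hx₁0 : x₁ ≠ 0 := by
          intro hx₁z
          apply hv0
          rw [hvd, hx₀0, hx₁z, zero_smul, zero_smul, add_zero]
        have hPmk : Projectivization.mk F v hv0 = Projectivization.mk F w₂ hw₂0 := by
          rw [Projectivization.mk_eq_mk_iff']
          refine ⟨x₁, ?_⟩
          rw [hvd, hx₀0, zero_smul, zero_add]
        rw [← hPmk]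
        exact (Projectivization.mk_rep P).symm
      · apply Set.mem_insert_iff.mpr
        right
        set t := x₁ / x₀ with ht
        have hts : t ^ s = t := by
          rcases eq_or_ne bB 0 with hb0 | hb0
          · exact hall_of_b0 hb0 t
          · have h2 : x₀ * x₁ ^ s - x₁ * x₀ ^ s = 0 :=
              (mul_eq_zero.mp hgv2).resolve_left hb0
            rw [ht, div_pow, div_eq_div_iff (pow_ne_zero s hx₀0) hx₀0]
            linear_combination h2
        refine ⟨t, hts, ?_⟩
        have hPmk : Projectivization.mk F (w₁ + t • w₂) (hwne t) =
            Projectivization.mk F v hv0 := by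
          rw [Projectivization.mk_eq_mk_iff']
          refine ⟨x₀⁻¹, ?_⟩
          rw [hvd, smul_add, smul_smul, smul_smul, inv_mul_cancel₀ hx₀0, one_smul]
          congr 1
          rw [ht, div_eq_inv_mul]
        show Projectivization.mk F (w₁ + t • w₂) (hwne t) = P
        rw [hPmk]
        exact Projectivization.mk_rep P
    · intro hP
      rcases Set.mem_insert_iff.mp hP with hPeq | ⟨t, hts, hft⟩
      · rw [hPeq]
        exact (hmem w₂ hw₂0).mpr hgw₂
      · rw [← hft]
        apply (hmem _ (hwne t)).mpr
        have hone : w₁ + t • w₂ = (1 : F) • w₁ + t • w₂ := by rw [one_smul]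
        rw [hone, hexp, hcb]
        have hts' : t ^ s = t := hts
        rw [hts']
        ring
  have hnotmem : Projectivization.mk F w₂ hw₂0 ∉ f '' {t : F | t ^ s = t} := by
    rintro ⟨t, -, hft⟩
    obtain ⟨a, ha⟩ := (Projectivization.mk_eq_mk_iff' F _ _ _ _).mp hft.symm
    have h0 := congrFun ha 0
    have h1 := congrFun ha 1
    simp only [Pi.smul_apply, Pi.add_apply, smul_eq_mul] at h0 h1
    have ha0 : a ≠ 0 := by
      rintro rfl
      apply hw₂0
      apply ext2 <;> simp only [Pi.zero_apply]
      · linear_combination -h0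
      · linear_combination -h1
    have h3 : a * (w₁ 0 * w₂ 1 - w₁ 1 * w₂ 0) = 0 := by
      linear_combination w₂ 1 * h0 - w₂ 0 * h1
    exact hδw ((mul_eq_zero.mp h3).resolve_left ha0)
  have hfinj : Set.InjOn f {t : F | t ^ s = t} := by
    intro t₁ _ t₂ _ hft
    obtain ⟨a, ha⟩ := (Projectivization.mk_eq_mk_iff' F _ _ _ _).mp hft
    have h0 := congrFun ha 0
    have h1 := congrFun ha 1
    simp only [Pi.smul_apply, Pi.add_apply, smul_eq_mul] at h0 h1
    have hc := indep_aux hδw (y₀ := a - 1) (y₁ := a * t₂ - t₁)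
      (by linear_combination h0) (by linear_combination h1)
    have ha1 : a = 1 := by
      have := hc.1
      linear_combination this
    have h2 := hc.2
    rw [ha1, one_mul] at h2
    exact (sub_eq_zero.mp h2).symm
  have hScard : {t : F | t ^ s = t}.ncard = q := ncard_pow_fix q n m hq hn hm hmn F hF
  rw [hΓeq, Set.ncard_insert_of_notMem hnotmem (Set.toFinite _),
    Set.ncard_image_of_injOn hfinj, hScard]
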